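/- Let ψ be a solution on the class of monotone games satisfying AE (average efficiency), S (symmetry), I (invariance), cParM (c-participation monotonicity) and RcParM (relative c-participation monotonicity). Let u be a monotone game, ε > 0, C₁ = {i ∈ N : c(u, i) = 1}, and let u^ε be the perturbed game defined by u^ε(S) = u(S) + ε if S ∩ C₁ ≠ ∅ and u^ε(S) = u(S) otherwise. Then ψ(u^ε) = AP(u^ε), where AP is the average participation solution. -/

import Mathlib

open Finset
open scoped Classical

/-- A monotone game on agent set `Fin n`: `u ∅ = 0` and `u` is monotone w.r.t. inclusion. -/
def IsMonotoneGame (n : ℕ) (u : Finset (Fin n) → ℝ) : Prop :=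
  u ∅ = 0 ∧ ∀ S T : Finset (Fin n), S ⊆ T → u S ≤ u T

/-- The contribution indicator: `c(u,i) = 0` if `u (S ∪ {i}) = u S` for every `S`,
and `c(u,i) = 1` otherwise. -/
noncomputable def contrib {n : ℕ} (u : Finset (Fin n) → ℝ) (i : Fin n) : ℝ :=
  if ∀ S : Finset (Fin n), u (insert i S) = u S then 0 else 1

/-- The set `C₁` of agents with contribution indicator `1`. -/
noncomputable def C1 {n : ℕ} (u : Finset (Fin n) → ℝ) : Finset (Fin n) :=
  Finset.univ.filter fun i => contrib u i = 1

/-- The perturbed game `u^ε`: `u^ε S = u S + ε` if `S ∩ C₁ ≠ ∅`, and `u^ε S = u S`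
otherwise. -/
noncomputable def perturb {n : ℕ} (u : Finset (Fin n) → ℝ) (ε : ℝ) :
    Finset (Fin n) → ℝ :=
  fun S => if (S ∩ C1 u).Nonempty then u S + ε else u S

/-- The average participation solution, with weight `w = 1 / (2 ^ n - 1)`. -/
noncomputable def AP {n : ℕ} (u : Finset (Fin n) → ℝ) (i : Fin n) : ℝ :=
  ∑ S ∈ (Finset.univ.erase i).powerset,
    (1 / (2 ^ n - 1 : ℝ)) * (contrib u i / ((∑ j ∈ S, contrib u j) + 1)) * u (insert i S)

namespace APWork

variable {n : ℕ}

/-- `Kg u b` : `b` is a "nice" game whose contribution structure is given by `C1 u`. -/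
structure Kg (u b : Finset (Fin n) → ℝ) : Prop where
  mono : IsMonotoneGame n b
  trace : ∀ T, b T = b (T ∩ C1 u)
  pos : ∀ T : Finset (Fin n), (T ∩ C1 u).Nonempty → 0 < b T

lemma not_mem_C1 {u : Finset (Fin n) → ℝ} {j : Fin n} (hj : j ∉ C1 u) :
    ∀ S, u (insert j S) = u S := by
  by_contra h
  exact hj (mem_filter.2 ⟨mem_univ _, by rw [contrib, if_neg h]⟩)

lemma insert_inter_C1_of_not_mem {u : Finset (Fin n) → ℝ} {j : Fin n} (hj : j ∉ C1 u)
    (S : Finset (Fin n)) : insert j S ∩ C1 u = S ∩ C1 u := by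
  ext x
  simp only [mem_inter, mem_insert]
  constructor
  · rintro ⟨h1 | h1, h2⟩
    · exact absurd (h1 ▸ h2) hj
    · exact ⟨h1, h2⟩
  · rintro ⟨h1, h2⟩; exact ⟨Or.inr h1, h2⟩

lemma Kg.contrib_eq {u b : Finset (Fin n) → ℝ} (hb : Kg u b) (j : Fin n) :
    contrib b j = if j ∈ C1 u then 1 else 0 := by
  by_cases hj : j ∈ C1 u
  · rw [if_pos hj, contrib, if_neg]
    intro h
    have h0 := h ∅
    have hne : (({j} : Finset (Fin n)) ∩ C1 u).Nonempty :=
      ⟨j, mem_inter.2 ⟨mem_singleton_self j, hj⟩⟩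
    have hpos := hb.pos _ hne
    rw [show insert j (∅ : Finset (Fin n)) = {j} from rfl] at h0
    rw [h0, hb.mono.1] at hpos
    exact lt_irrefl _ hpos
  · rw [if_neg hj, contrib, if_pos]
    intro S
    rw [hb.trace (insert j S), insert_inter_C1_of_not_mem hj, ← hb.trace S]

lemma Kg.contrib_sum {u b : Finset (Fin n) → ℝ} (hb : Kg u b) (S : Finset (Fin n)) :
    ∑ j ∈ S, contrib b j = ((S ∩ C1 u).card : ℝ) := by
  have : ∀ j ∈ S, contrib b j = if j ∈ C1 u then (1:ℝ) else 0 := fun j _ => hb.contrib_eq j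
  rw [Finset.sum_congr rfl this, Finset.sum_ite_mem]
  simp

lemma Kg.zero_of_empty_inter {u b : Finset (Fin n) → ℝ} (hb : Kg u b) {T : Finset (Fin n)}
    (hT : T ∩ C1 u = ∅) : b T = 0 := by
  rw [hb.trace T, hT, hb.mono.1]

/-- Normal form for AP on a `Kg` game at a contributing player. -/
lemma AP_form {u b : Finset (Fin n) → ℝ} (hb : Kg u b) {i : Fin n} (hi : i ∈ C1 u) :
    AP b i = ∑ S ∈ (Finset.univ.erase i).powerset,
      (1 / (2 ^ n - 1 : ℝ)) * b (insert i S) / (((insert i S ∩ C1 u).card : ℝ)) := by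
  refine Finset.sum_congr rfl fun S hS => ?_
  have hiS : i ∉ S := fun h => (mem_erase.1 ((mem_powerset.1 hS) h)).1 rfl
  have h1 : insert i S ∩ C1 u = insert i (S ∩ C1 u) := insert_inter_of_mem hi
  have h2 : i ∉ S ∩ C1 u := fun h => hiS (mem_inter.1 h).1
  rw [hb.contrib_sum, hb.contrib_eq, if_pos hi, h1, card_insert_of_notMem h2]
  push_cast
  ring

lemma AP_zero {u b : Finset (Fin n) → ℝ} (hb : Kg u b) {i : Fin n} (hi : i ∉ C1 u) :
    AP b i = 0 := by
  refine Finset.sum_eq_zero fun S _ => ?_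
  rw [hb.contrib_eq, if_neg hi]
  simp

/-- AP satisfies average efficiency on `Kg` games. -/
lemma AP_eff {u b : Finset (Fin n) → ℝ} (hb : Kg u b) :
    ∑ i, AP b i
      = (1 / (2 ^ n - 1 : ℝ)) * ∑ S ∈ (Finset.univ : Finset (Fin n)).powerset, b S := by
  classical
  set w : ℝ := 1 / (2 ^ n - 1 : ℝ) with hw
  set H : Finset (Fin n) → ℝ := fun T => w * b T / ((T ∩ C1 u).card : ℝ) with hH
  have h1 : ∑ i, AP b i = ∑ i ∈ C1 u, AP b i := by
    refine (Finset.sum_subset (subset_univ _) fun i _ hi => AP_zero hb hi).symm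
  have h2 : ∀ i ∈ C1 u, AP b i
      = ∑ T ∈ (Finset.univ : Finset (Fin n)).powerset.filter (fun T => i ∈ T), H T := by
    intro i hi
    rw [AP_form hb hi]
    refine Finset.sum_nbij' (fun S => insert i S) (fun T => T.erase i) ?_ ?_ ?_ ?_ ?_
    · intro S hS
      rw [mem_filter, mem_powerset]
      exact ⟨subset_univ _, mem_insert_self _ _⟩
    · intro T hT
      rw [mem_powerset]
      exact erase_subset_erase _ (subset_univ _)
    · intro S hS
      rw [mem_powerset] at hS
      exact erase_insert (fun h => (mem_erase.1 (hS h)).1 rfl)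
    · intro T hT
      exact insert_erase (mem_filter.1 hT).2
    · intro S _; rfl
  rw [h1, Finset.sum_congr rfl h2]
  have h3 : ∀ i ∈ C1 u,
      (∑ T ∈ (Finset.univ : Finset (Fin n)).powerset.filter (fun T => i ∈ T), H T)
        = ∑ T ∈ (Finset.univ : Finset (Fin n)).powerset, if i ∈ T then H T else 0 :=
    fun i _ => Finset.sum_filter _ _
  rw [Finset.sum_congr rfl h3, Finset.sum_comm]
  have h4 : ∀ T ∈ (Finset.univ : Finset (Fin n)).powerset,
      (∑ i ∈ C1 u, if i ∈ T then H T else 0) = w * b T := by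
    intro T _
    rw [Finset.sum_ite_mem, Finset.sum_const]
    by_cases hT : (T ∩ C1 u).Nonempty
    · have hcard : ((T ∩ C1 u).card : ℝ) ≠ 0 := by
        exact_mod_cast Finset.card_ne_zero_of_mem hT.choose_spec
      rw [inter_comm (C1 u) T, nsmul_eq_mul, hH]
      field_simp
    · rw [not_nonempty_iff_eq_empty] at hT
      rw [hb.zero_of_empty_inter hT, hH]
      simp [inter_comm (C1 u) T, hT]
  rw [Finset.sum_congr rfl h4, ← Finset.mul_sum]

lemma mem_image_swap {i k x : Fin n} {s : Finset (Fin n)} :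
    x ∈ s.image (Equiv.swap i k) ↔ (Equiv.swap i k) x ∈ s := by
  constructor
  · intro h
    obtain ⟨y, hy, rfl⟩ := mem_image.1 h
    simpa using hy
  · intro h
    exact mem_image.2 ⟨_, h, by simp⟩

lemma image_swap_image_swap {i k : Fin n} (s : Finset (Fin n)) :
    (s.image (Equiv.swap i k)).image (Equiv.swap i k) = s := by
  ext x; simp [mem_image_swap]

/-- A sum rearrangement lemma : swapping the distinguished player. -/
lemma swap_sum {i k : Fin n} (G : Finset (Fin n) → ℝ)
    (hG : ∀ A : Finset (Fin n), G (A.image (Equiv.swap i k)) = G A) :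
    ∑ S ∈ (Finset.univ.erase i).powerset, G (insert i S)
      = ∑ S ∈ (Finset.univ.erase k).powerset, G (insert k S) := by
  refine Finset.sum_nbij' (fun S => S.image (Equiv.swap i k))
    (fun S => S.image (Equiv.swap i k)) ?_ ?_ ?_ ?_ ?_
  · intro S hS
    rw [mem_powerset] at *
    intro x hx
    rw [mem_image_swap] at hx
    have := (mem_erase.1 (hS hx)).1
    rw [mem_erase]
    refine ⟨fun hxk => ?_, mem_univ _⟩
    subst hxk
    simp at this
  · intro S hS
    rw [mem_powerset] at *
    intro x hx
    rw [mem_image_swap] at hx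
    have := (mem_erase.1 (hS hx)).1
    rw [mem_erase]
    refine ⟨fun hxk => ?_, mem_univ _⟩
    subst hxk
    simp at this
  · intro S _; exact image_swap_image_swap S
  · intro S _; exact image_swap_image_swap S
  · intro S _
    rw [← hG (insert i S), Finset.image_insert, Equiv.swap_apply_left]

lemma swap_mem_C1 {u : Finset (Fin n) → ℝ} {i k : Fin n} (hi : i ∈ C1 u) (hk : k ∈ C1 u)
    (x : Fin n) : (Equiv.swap i k) x ∈ C1 u ↔ x ∈ C1 u := by
  rcases eq_or_ne x i with rfl | hxi
  · rw [Equiv.swap_apply_left]; simp [hi, hk]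
  rcases eq_or_ne x k with rfl | hxk
  · rw [Equiv.swap_apply_right]; simp [hi, hk]
  · rw [Equiv.swap_apply_of_ne_of_ne hxi hxk]

lemma image_swap_inter {u : Finset (Fin n) → ℝ} {i k : Fin n} (hi : i ∈ C1 u)
    (hk : k ∈ C1 u) (T : Finset (Fin n)) :
    T.image (Equiv.swap i k) ∩ C1 u = (T ∩ C1 u).image (Equiv.swap i k) := by
  ext x
  simp only [mem_inter, mem_image_swap]
  constructor
  · rintro ⟨h1, h2⟩; exact ⟨h1, (swap_mem_C1 hi hk x).2 h2⟩
  · rintro ⟨h1, h2⟩; exact ⟨h1, (swap_mem_C1 hi hk x).1 h2⟩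

lemma image_swap_self {i k : Fin n} {A : Finset (Fin n)} (hi : i ∈ A) (hk : k ∈ A) :
    A.image (Equiv.swap i k) = A := by
  ext x
  rw [mem_image_swap]
  rcases eq_or_ne x i with rfl | hxi
  · rw [Equiv.swap_apply_left]; simp [hi, hk]
  rcases eq_or_ne x k with rfl | hxk
  · rw [Equiv.swap_apply_right]; simp [hi, hk]
  · rw [Equiv.swap_apply_of_ne_of_ne hxi hxk]

lemma card_inter_image_swap {u : Finset (Fin n) → ℝ} {i k : Fin n} (hi : i ∈ C1 u)
    (hk : k ∈ C1 u) (T : Finset (Fin n)) :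
    ((T.image (Equiv.swap i k)) ∩ C1 u).card = (T ∩ C1 u).card := by
  rw [image_swap_inter hi hk]
  exact Finset.card_image_of_injective _ (Equiv.injective _)

/-- AP is symmetric between `i` and `k` for swap-invariant `Kg` games. -/
lemma AP_swap_eq {u b : Finset (Fin n) → ℝ} (hb : Kg u b) {i k : Fin n}
    (hi : i ∈ C1 u) (hk : k ∈ C1 u)
    (hbinv : ∀ T, b (T.image (Equiv.swap i k)) = b T) : AP b i = AP b k := by
  rw [AP_form hb hi, AP_form hb hk]
  refine swap_sum (fun T => (1 / (2 ^ n - 1 : ℝ)) * b T / ((T ∩ C1 u).card : ℝ))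
    (fun A => ?_)
  rw [hbinv A, card_inter_image_swap hi hk]

/-- AP differences are symmetric between `i` and `k` when the difference game is
swap-invariant. -/
lemma AP_diff_eq {u b b' : Finset (Fin n) → ℝ} (hb : Kg u b) (hb' : Kg u b')
    {i k : Fin n} (hi : i ∈ C1 u) (hk : k ∈ C1 u)
    (hinv : ∀ T, b' (T.image (Equiv.swap i k)) - b (T.image (Equiv.swap i k))
      = b' T - b T) :
    AP b' i - AP b i = AP b' k - AP b k := by
  set w : ℝ := 1 / (2 ^ n - 1 : ℝ) with hw
  set G : Finset (Fin n) → ℝ := fun T => w * (b' T - b T) / ((T ∩ C1 u).card : ℝ) with hG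
  have key : ∀ (j : Fin n), j ∈ C1 u → AP b' j - AP b j
      = ∑ S ∈ (Finset.univ.erase j).powerset, G (insert j S) := by
    intro j hj
    rw [AP_form hb' hj, AP_form hb hj, ← Finset.sum_sub_distrib]
    refine Finset.sum_congr rfl fun S _ => ?_
    simp only [hG]
    ring
  rw [key i hi, key k hk]
  refine swap_sum G fun A => ?_
  simp only [hG]
  rw [hinv A, card_inter_image_swap hi hk]

/-- The partial games along the path. -/
noncomputable def bU (u : Finset (Fin n) → ℝ) (ε : ℝ) (U : Finset (Finset (Fin n))) :
    Finset (Fin n) → ℝ :=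
  fun T => if (T ∩ C1 u).Nonempty then
    ε + (if T ∩ C1 u ∈ U then u (T ∩ C1 u) else 0) else 0

/-- Upward closed families of nonempty subsets of `C1 u`. -/
def UpC (u : Finset (Fin n) → ℝ) (U : Finset (Finset (Fin n))) : Prop :=
  ∀ A ∈ U, (A ⊆ C1 u ∧ A.Nonempty) ∧ ∀ A', A ⊆ A' → A' ⊆ C1 u → A' ∈ U

lemma u_nonneg {u : Finset (Fin n) → ℝ} (hu : IsMonotoneGame n u) (A : Finset (Fin n)) :
    0 ≤ u A := by
  rw [← hu.1]; exact hu.2 _ _ (empty_subset A)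

lemma Kg_bU {u : Finset (Fin n) → ℝ} {ε : ℝ} (hu : IsMonotoneGame n u) (hε : 0 < ε)
    {U : Finset (Finset (Fin n))} (hU : UpC u U) : Kg u (bU u ε U) := by
  have hnn := u_nonneg hu
  have key : ∀ {A A' : Finset (Fin n)}, A ⊆ A' → A' ⊆ C1 u →
      (if A ∈ U then u A else 0) ≤ (if A' ∈ U then u A' else 0) := by
    intro A A' hAA' hA'C
    by_cases hAU : A ∈ U
    · rw [if_pos hAU, if_pos ((hU A hAU).2 A' hAA' hA'C)]
      exact hu.2 _ _ hAA'
    · rw [if_neg hAU]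
      by_cases h' : A' ∈ U
      · rw [if_pos h']; exact hnn _
      · rw [if_neg h']
  constructor
  · constructor
    · simp [bU]
    · intro S T hST
      have hAA' : S ∩ C1 u ⊆ T ∩ C1 u := inter_subset_inter hST (Subset.refl _)
      simp only [bU]
      by_cases hA : (S ∩ C1 u).Nonempty
      · have hA' : (T ∩ C1 u).Nonempty := hA.mono hAA'
        rw [if_pos hA, if_pos hA']
        have := key hAA' (inter_subset_right)
        linarith
      · rw [if_neg hA]
        by_cases hA' : (T ∩ C1 u).Nonempty
        · rw [if_pos hA']
          have : (0:ℝ) ≤ (if T ∩ C1 u ∈ U then u (T ∩ C1 u) else 0) := by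
            by_cases h' : T ∩ C1 u ∈ U
            · rw [if_pos h']; exact hnn _
            · rw [if_neg h']
          linarith
        · rw [if_neg hA']
  · intro T
    have h1 : T ∩ C1 u ∩ C1 u = T ∩ C1 u := by rw [inter_assoc, inter_self]
    simp only [bU, h1]
  · intro T hT
    simp only [bU]
    rw [if_pos hT]
    have : (0:ℝ) ≤ (if T ∩ C1 u ∈ U then u (T ∩ C1 u) else 0) := by
      by_cases h' : T ∩ C1 u ∈ U
      · rw [if_pos h']; exact hnn _
      · rw [if_neg h']
    linarith

lemma bU_step {u : Finset (Fin n) → ℝ} {ε : ℝ} {U : Finset (Finset (Fin n))}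
    {A₀ : Finset (Fin n)} (hA₀ : A₀ ∈ U) (hA₀ne : A₀.Nonempty) (T : Finset (Fin n)) :
    bU u ε U T = bU u ε (U.erase A₀) T + (if T ∩ C1 u = A₀ then u A₀ else 0) := by
  simp only [bU]
  by_cases hne : (T ∩ C1 u).Nonempty
  · rw [if_pos hne, if_pos hne]
    by_cases h : T ∩ C1 u = A₀
    · rw [if_pos h, if_pos (h ▸ hA₀), if_neg (by rw [h]; exact notMem_erase _ _)]
      rw [h]; ring
    · rw [if_neg h]
      have hiff : (T ∩ C1 u ∈ U.erase A₀) ↔ (T ∩ C1 u ∈ U) := by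
        rw [mem_erase]; exact ⟨fun h' => h'.2, fun h' => ⟨h, h'⟩⟩
      by_cases h' : T ∩ C1 u ∈ U
      · rw [if_pos h', if_pos (hiff.2 h')]; ring
      · rw [if_neg h', if_neg (fun hh => h' (hiff.1 hh))]; ring
  · rw [if_neg hne, if_neg hne]
    have h : T ∩ C1 u ≠ A₀ := by
      intro h; rw [h] at hne; exact hne hA₀ne
    rw [if_neg h]; ring

lemma u_trace {u : Finset (Fin n) → ℝ} (T : Finset (Fin n)) : u T = u (T ∩ C1 u) := by
  induction T using Finset.strongInduction with
  | _ T IH =>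
    by_cases hTC : T ⊆ C1 u
    · rw [inter_eq_left.2 hTC]
    · obtain ⟨j, hjT, hjC⟩ := not_subset.1 hTC
      have h1 : u T = u (T.erase j) := by
        conv_lhs => rw [← insert_erase hjT]
        rw [not_mem_C1 hjC]
      have h2 : T.erase j ∩ C1 u = T ∩ C1 u := by
        ext x
        simp only [mem_inter, mem_erase]
        constructor
        · rintro ⟨⟨_, h⟩, h'⟩; exact ⟨h, h'⟩
        · rintro ⟨h, h'⟩
          exact ⟨⟨fun hx => hjC (hx ▸ h'), h⟩, h'⟩
      rw [h1, IH _ (erase_ssubset hjT), h2]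

/-- The full family : all nonempty subsets of `C1 u`. -/
noncomputable def Ufull (u : Finset (Fin n) → ℝ) : Finset (Finset (Fin n)) :=
  (C1 u).powerset.filter fun A => A.Nonempty

lemma UpC_Ufull (u : Finset (Fin n) → ℝ) : UpC u (Ufull u) := by
  intro A hA
  rw [Ufull, mem_filter, mem_powerset] at hA
  exact ⟨⟨hA.1, hA.2⟩, fun A' hAA' hA'C =>
    mem_filter.2 ⟨mem_powerset.2 hA'C, hA.2.mono hAA'⟩⟩

lemma perturb_eq_bU {u : Finset (Fin n) → ℝ} (hu : IsMonotoneGame n u) {ε : ℝ} :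
    perturb u ε = bU u ε (Ufull u) := by
  funext T
  simp only [perturb, bU]
  by_cases hne : (T ∩ C1 u).Nonempty
  · have hmem : T ∩ C1 u ∈ Ufull u :=
      mem_filter.2 ⟨mem_powerset.2 inter_subset_right, hne⟩
    rw [if_pos hne, if_pos hne, if_pos hmem, ← u_trace (u := u) T]
    ring
  · rw [if_neg hne, if_neg hne]
    rw [not_nonempty_iff_eq_empty] at hne
    calc u T = u (T ∩ C1 u) := u_trace T
    _ = 0 := by rw [hne, hu.1]

section MainInduction

variable (ψ : (Finset (Fin n) → ℝ) → Fin n → ℝ)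

/-- The main induction along the path of games. -/
lemma main_ind
    (hAE : ∀ u, IsMonotoneGame n u →
      ∑ i, ψ u i =
        (1 / (2 ^ n - 1 : ℝ)) * ∑ S ∈ (Finset.univ : Finset (Fin n)).powerset, u S)
    (hS : ∀ u, IsMonotoneGame n u → ∀ i j : Fin n,
      (∀ S : Finset (Fin n), i ∉ S → j ∉ S → u (insert i S) = u (insert j S)) →
      ψ u i = ψ u j)
    (hI : ∀ u, IsMonotoneGame n u → ∀ i : Fin n, contrib u i = 0 → ψ u i = 0)
    (hcParM : ∀ u v, IsMonotoneGame n u → IsMonotoneGame n v →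
      (∀ j : Fin n, contrib u j = contrib v j) → ∀ i : Fin n,
      (∀ S : Finset (Fin n), u (insert i S) ≥ v (insert i S)) → ψ u i ≥ ψ v i)
    (hRcParM : ∀ u v, IsMonotoneGame n u → IsMonotoneGame n v →
      (∀ j : Fin n, contrib u j = contrib v j) → ∀ i k : Fin n,
      contrib u i = contrib u k →
      (∀ S : Finset (Fin n), i ∉ S → k ∉ S →
        u (insert i S) - v (insert i S) ≥ u (insert k S) - v (insert k S)) →
      ψ u i - ψ v i ≥ ψ u k - ψ v k)
    {u : Finset (Fin n) → ℝ} (hu : IsMonotoneGame n u) {ε : ℝ} (hε : 0 < ε) :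
    ∀ U : Finset (Finset (Fin n)), UpC u U →
      ∀ i, ψ (bU u ε U) i = AP (bU u ε U) i := by
  intro U
  induction U using Finset.strongInduction with
  | _ U IH =>
  intro hU i
  by_cases hUe : U = ∅
  · -- base case : the fully symmetric game
    subst hUe
    set b := bU u ε (∅ : Finset (Finset (Fin n))) with hbdef
    have hb : Kg u b := Kg_bU hu hε (fun A hA => absurd hA (notMem_empty A))
    have hsec : ∀ x ∈ C1 u, ∀ S : Finset (Fin n), b (insert x S) = ε := by
      intro x hx S
      have hne : ((insert x S) ∩ C1 u).Nonempty :=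
        ⟨x, mem_inter.2 ⟨mem_insert_self _ _, hx⟩⟩
      simp only [hbdef, bU]
      rw [if_pos hne, if_neg (notMem_empty _)]
      ring
    by_cases hi : i ∈ C1 u
    · set f : Fin n → ℝ := fun j => ψ b j - AP b j with hf
      have hoff : ∀ j, j ∉ C1 u → f j = 0 := by
        intro j hj
        have h1 : ψ b j = 0 := hI b hb.mono j (by rw [hb.contrib_eq, if_neg hj])
        have h2 : AP b j = 0 := AP_zero hb hj
        simp [hf, h1, h2]
      have hconst : ∀ j ∈ C1 u, f j = f i := by
        intro j hj
        have h1 : ψ b j = ψ b i :=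
          hS b hb.mono j i (fun S _ _ => by rw [hsec j hj, hsec i hi])
        have hswapinv : ∀ T, b (T.image (Equiv.swap j i)) = b T := by
          intro T
          simp only [hbdef, bU]
          rw [image_swap_inter hj hi]
          by_cases hT : (T ∩ C1 u).Nonempty
          · rw [if_pos (by rwa [Finset.image_nonempty]), if_pos hT,
              if_neg (notMem_empty _), if_neg (notMem_empty _)]
          · rw [if_neg (by rwa [Finset.image_nonempty]), if_neg hT]
        have h2 : AP b j = AP b i := AP_swap_eq hb hj hi hswapinv
        simp [hf, h1, h2]
      have hsum : ∑ j, f j = 0 := by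
        simp only [hf]
        rw [Finset.sum_sub_distrib, hAE b hb.mono, AP_eff hb]
        ring
      have hsub : ∑ j ∈ C1 u, f j = 0 := by
        rw [Finset.sum_subset (subset_univ _) (fun j _ hj => hoff j hj)]
        exact hsum
      rw [Finset.sum_congr rfl hconst, Finset.sum_const, nsmul_eq_mul] at hsub
      have hcard : ((C1 u).card : ℝ) ≠ 0 :=
        Nat.cast_ne_zero.2 (Finset.card_ne_zero_of_mem hi)
      have hfi : f i = 0 := by
        rcases mul_eq_zero.1 hsub with h | h
        · exact absurd h hcard
        · exact h
      have := hfi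
      simp only [hf] at this
      linarith
    · rw [hI b hb.mono i (by rw [hb.contrib_eq, if_neg hi]), AP_zero hb hi]
  · -- inductive step
    obtain ⟨A₀, hA₀U, hmin⟩ :=
      Finset.exists_min_image U Finset.card (nonempty_of_ne_empty hUe)
    obtain ⟨⟨hA₀C, hA₀ne⟩, _⟩ := hU A₀ hA₀U
    have hU' : UpC u (U.erase A₀) := by
      intro A hA
      have hAU : A ∈ U := mem_of_mem_erase hA
      obtain ⟨hprops, hup⟩ := hU A hAU
      refine ⟨hprops, fun A' hAA' hA'C => ?_⟩
      have hA'U : A' ∈ U := hup A' hAA' hA'C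
      rw [mem_erase]
      refine ⟨fun hA'A₀ => ?_, hA'U⟩
      subst hA'A₀
      have hne : A ≠ A' := (mem_erase.1 hA).1
      have hlt : A.card < A'.card :=
        Finset.card_lt_card (ssubset_of_subset_of_ne hAA' hne)
      exact absurd (hmin A hAU) (not_le.2 hlt)
    set b' := bU u ε U with hb'def
    set b := bU u ε (U.erase A₀) with hbdef
    have hb' : Kg u b' := Kg_bU hu hε hU
    have hb : Kg u b := Kg_bU hu hε hU'
    have hstep : ∀ T, b' T = b T + (if T ∩ C1 u = A₀ then u A₀ else 0) :=
      bU_step hA₀U hA₀ne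
    have hcontribs : ∀ j, contrib b' j = contrib b j := by
      intro j; rw [hb'.contrib_eq, hb.contrib_eq]
    have hIH' := IH (U.erase A₀) (erase_ssubset hA₀U) hU'
    have hsecoff : ∀ j, j ∈ C1 u → j ∉ A₀ → ∀ S, b' (insert j S) = b (insert j S) := by
      intro j hj hjA S
      rw [hstep, if_neg, add_zero]
      intro h
      exact hjA (h ▸ mem_inter.2 ⟨mem_insert_self _ _, hj⟩)
    have hpsioff : ∀ j, j ∈ C1 u → j ∉ A₀ → ψ b' j = ψ b j := by
      intro j hj hjA
      have h1 := hcParM b' b hb'.mono hb.mono hcontribs j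
        (fun S => ge_of_eq (hsecoff j hj hjA S))
      have h2 := hcParM b b' hb.mono hb'.mono (fun l => (hcontribs l).symm) j
        (fun S => ge_of_eq (hsecoff j hj hjA S).symm)
      linarith
    have hAPoff : ∀ j, j ∈ C1 u → j ∉ A₀ → AP b' j = AP b j := by
      intro j hj hjA
      rw [AP_form hb' hj, AP_form hb hj]
      exact Finset.sum_congr rfl (fun S _ => by rw [hsecoff j hj hjA S])
    have hpsipair : ∀ j l, j ∈ A₀ → l ∈ A₀ → ψ b' j - ψ b j = ψ b' l - ψ b l := by
      intro j l hj hl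
      rcases eq_or_ne j l with rfl | hjl
      · rfl
      have key : ∀ p q : Fin n, p ∈ A₀ → q ∈ A₀ → p ≠ q →
          (∀ S : Finset (Fin n), p ∉ S → q ∉ S →
            b' (insert p S) - b (insert p S) ≥ b' (insert q S) - b (insert q S)) := by
        intro p q hp hq hpq S hpS hqS
        have hzero : ∀ r r' : Fin n, r' ∈ A₀ → r' ≠ r → r' ∉ S →
            b' (insert r S) - b (insert r S) = 0 := by
          intro r r' hr' hne hr'S
          rw [hstep, if_neg]
          · ring
          · intro h
            have : r' ∈ insert r S := (mem_inter.1 (h ▸ hr' : r' ∈ insert r S ∩ C1 u)).1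
            rcases mem_insert.1 this with h' | h'
            · exact hne h'
            · exact hr'S h'
        rw [hzero p q hq (Ne.symm hpq) hqS, hzero q p hp hpq hpS]
      have hcontrib_jl : contrib b' j = contrib b' l := by
        rw [hb'.contrib_eq, hb'.contrib_eq, if_pos (hA₀C hj), if_pos (hA₀C hl)]
      have h1 := hRcParM b' b hb'.mono hb.mono hcontribs j l hcontrib_jl
        (key j l hj hl hjl)
      have h2 := hRcParM b' b hb'.mono hb.mono hcontribs l j hcontrib_jl.symm
        (key l j hl hj hjl.symm)
      linarith
    have hAPpair : ∀ j l, j ∈ A₀ → l ∈ A₀ → AP b' j - AP b j = AP b' l - AP b l := by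
      intro j l hj hl
      refine AP_diff_eq hb hb' (hA₀C hj) (hA₀C hl) ?_
      intro T
      have hcond : (T.image (Equiv.swap j l) ∩ C1 u = A₀) ↔ (T ∩ C1 u = A₀) := by
        rw [image_swap_inter (hA₀C hj) (hA₀C hl)]
        constructor
        · intro h
          have h2 := congrArg (Finset.image (Equiv.swap j l)) h
          rw [image_swap_image_swap] at h2
          rw [h2, image_swap_self hj hl]
        · intro h
          rw [h, image_swap_self hj hl]
      rw [hstep, hstep T]
      by_cases h : T ∩ C1 u = A₀
      · rw [if_pos h, if_pos (hcond.2 h)]; ring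
      · rw [if_neg h, if_neg (fun hh => h (hcond.1 hh))]; ring
    by_cases hi : i ∈ C1 u
    · by_cases hiA : i ∈ A₀
      · set f : Fin n → ℝ := fun j => (ψ b' j - ψ b j) - (AP b' j - AP b j) with hf
        have hoff : ∀ j, j ∉ A₀ → f j = 0 := by
          intro j hjA
          by_cases hj : j ∈ C1 u
          · simp [hf, hpsioff j hj hjA, hAPoff j hj hjA]
          · have p1 : ψ b' j = 0 := hI b' hb'.mono j (by rw [hb'.contrib_eq, if_neg hj])
            have p2 : ψ b j = 0 := hI b hb.mono j (by rw [hb.contrib_eq, if_neg hj])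
            have p3 : AP b' j = 0 := AP_zero hb' hj
            have p4 : AP b j = 0 := AP_zero hb hj
            simp [hf, p1, p2, p3, p4]
        have hconst : ∀ j ∈ A₀, f j = f i := by
          intro j hj
          simp only [hf]
          rw [hpsipair j i hj hiA, hAPpair j i hj hiA]
        have hsum : ∑ j, f j = 0 := by
          simp only [hf]
          rw [Finset.sum_sub_distrib, Finset.sum_sub_distrib, Finset.sum_sub_distrib,
            hAE b' hb'.mono, hAE b hb.mono, AP_eff hb', AP_eff hb]
          ring
        have hsub : ∑ j ∈ A₀, f j = 0 := by
          rw [Finset.sum_subset (subset_univ _) (fun j _ hj => hoff j hj)]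
          exact hsum
        rw [Finset.sum_congr rfl hconst, Finset.sum_const, nsmul_eq_mul] at hsub
        have hcard : ((A₀).card : ℝ) ≠ 0 :=
          Nat.cast_ne_zero.2 (Finset.card_ne_zero_of_mem hiA)
        have hfi : f i = 0 := by
          rcases mul_eq_zero.1 hsub with h | h
          · exact absurd h hcard
          · exact h
        simp only [hf] at hfi
        have hIHi := hIH' i
        linarith
      · rw [hpsioff i hi hiA, hIH' i, hAPoff i hi hiA]
    · rw [hI b' hb'.mono i (by rw [hb'.contrib_eq, if_neg hi]), AP_zero hb' hi]

end MainInduction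

end APWork

/-- If ψ satisfies AE, S, I, cParM and RcParM, then ψ agrees with AP on the perturbed
game `u^ε`. -/
theorem psi_eq_ap_on_perturb (n : ℕ) (hn : 1 ≤ n)
    (ψ : (Finset (Fin n) → ℝ) → Fin n → ℝ)
    (hAE : ∀ u, IsMonotoneGame n u →
      ∑ i, ψ u i =
        (1 / (2 ^ n - 1 : ℝ)) * ∑ S ∈ (Finset.univ : Finset (Fin n)).powerset, u S)
    (hS : ∀ u, IsMonotoneGame n u → ∀ i j : Fin n,
      (∀ S : Finset (Fin n), i ∉ S → j ∉ S → u (insert i S) = u (insert j S)) →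
      ψ u i = ψ u j)
    (hI : ∀ u, IsMonotoneGame n u → ∀ i : Fin n, contrib u i = 0 → ψ u i = 0)
    (hcParM : ∀ u v, IsMonotoneGame n u → IsMonotoneGame n v →
      (∀ j : Fin n, contrib u j = contrib v j) → ∀ i : Fin n,
      (∀ S : Finset (Fin n), u (insert i S) ≥ v (insert i S)) → ψ u i ≥ ψ v i)
    (hRcParM : ∀ u v, IsMonotoneGame n u → IsMonotoneGame n v →
      (∀ j : Fin n, contrib u j = contrib v j) → ∀ i k : Fin n,
      contrib u i = contrib u k →
      (∀ S : Finset (Fin n), i ∉ S → k ∉ S →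
        u (insert i S) - v (insert i S) ≥ u (insert k S) - v (insert k S)) →
      ψ u i - ψ v i ≥ ψ u k - ψ v k)
    (u : Finset (Fin n) → ℝ) (hu : IsMonotoneGame n u) (ε : ℝ) (hε : 0 < ε) :
    ∀ i : Fin n, ψ (perturb u ε) i = AP (perturb u ε) i := by
  intro i
  rw [APWork.perturb_eq_bU hu]
  exact APWork.main_ind ψ hAE hS hI hcParM hRcParM hu hε (APWork.Ufull u)
    (APWork.UpC_Ufull u) i
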